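/- Let G be a graph with n vertices and no isolated vertices. Then for any 1 ≤ k ≤ n, S⁺_k(G) ≤ 2e(G) + 2k − n. -/

import Mathlib

open Matrix Polynomial

/-- Sum of the `k` largest entries of a finitely-indexed family of reals. -/
noncomputable def sumKLargest {V : Type*} [Fintype V] (v : V → ℝ) (k : ℕ) : ℝ :=
  (((Finset.univ.val.map v).toList.mergeSort (fun a b => decide (b ≤ a))).take k).sum

open Classical in
/-- The signless Laplacian matrix `Q(G) = D(G) + A(G)` of a simple graph. -/
noncomputable def signlessLap {V : Type*} [Fintype V] [DecidableEq V]
    (G : SimpleGraph V) : Matrix V V ℝ :=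
  G.degMatrix ℝ + G.adjMatrix ℝ

theorem signlessLap_isHermitian {V : Type*} [Fintype V] [DecidableEq V]
    (G : SimpleGraph V) : (signlessLap G).IsHermitian := by
  classical
  ext i j
  by_cases h : i = j
  · subst h; simp [signlessLap]
  · simp [signlessLap, Matrix.conjTranspose_apply, SimpleGraph.degMatrix,
      Matrix.diagonal_apply, h, Ne.symm h, SimpleGraph.adj_comm]

/-- `S⁺_k(G)`: the sum of the `k` largest signless Laplacian eigenvalues of `G`. -/
noncomputable def Splus {V : Type*} [Fintype V] [DecidableEq V]
    (G : SimpleGraph V) (k : ℕ) : ℝ :=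
  sumKLargest (signlessLap_isHermitian G).eigenvalues k

/-- `e(G)`: the number of edges of `G`. -/
noncomputable def numEdges {V : Type*} (G : SimpleGraph V) : ℕ := G.edgeSet.ncard

set_option linter.unusedSectionVars false

variable {V : Type*} [Fintype V] [DecidableEq V]

private lemma row_ineq (t a S Q : ℝ) (ht : 1 ≤ t) (hCS : S^2 ≤ t*Q) :
    (t*a + S)^2 + t*(S - a)^2 ≤ t*(t+1)*(a^2 + Q) := by nlinarith

lemma quad_eq_sum_sq {M B : Matrix V V ℝ} (hB : M = Bᵀ * B) (x : V → ℝ) :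
    x ⬝ᵥ (M *ᵥ x) = ∑ i, ((B *ᵥ x) i)^2 := by
  rw [hB, ← Matrix.mulVec_mulVec, Matrix.dotProduct_mulVec, Matrix.vecMul_transpose]
  simp [dotProduct, sq]

lemma star_quad (M : Matrix V V ℝ) (hM : M.PosSemidef)
    (hN : ((1 : Matrix V V ℝ) - M).PosSemidef)
    (c : V) (L : Finset V) (hc : c ∉ L) (hL : L.Nonempty) :
    2 * (M c c + ∑ v ∈ L, M v v) - ((L.card : ℝ) + 1) ≤
      ∑ v ∈ L, (fun w => (if w = c then (1:ℝ) else 0) + (if w = v then 1 else 0)) ⬝ᵥ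
        (M *ᵥ (fun w => (if w = c then (1:ℝ) else 0) + (if w = v then 1 else 0))) := by
  classical
  set N : Matrix V V ℝ := (1 : Matrix V V ℝ) - M with hNdef
  obtain ⟨B₀, hB₀⟩ : ∃ B₀ : Matrix V V ℝ, N = B₀ᴴ * B₀ := by
    open scoped MatrixOrder Matrix.Norms.L2Operator in
    exact CStarAlgebra.nonneg_iff_eq_star_mul_self.mp hN.nonneg
  have hB : N = B₀ᵀ * B₀ := by simpa [Matrix.conjTranspose_eq_transpose_of_trivial] using hB₀
  set B := B₀
  set t : ℝ := (L.card : ℝ) with htdef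
  have ht : 1 ≤ t := by
    have := hL.card_pos
    simp only [htdef]
    exact_mod_cast this
  set f : V → ℝ := fun i => B i c with hf
  set S : V → ℝ := fun i => ∑ v ∈ L, B i v with hS
  set Q : V → ℝ := fun i => ∑ v ∈ L, (B i v)^2 with hQ
  set u0 : V → ℝ := fun w => t * (if w = c then 1 else 0) + (if w ∈ L then 1 else 0) with hu0
  set r0 : V → ℝ := fun w => (if w ∈ L then 1 else 0) - (if w = c then 1 else 0) with hr0
  set x : V → V → ℝ := fun v w => (if w = c then (1:ℝ) else 0) + (if w = v then 1 else 0) with hx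
  have hBu : ∀ i, (B *ᵥ u0) i = t * f i + S i := by
    intro i
    simp only [Matrix.mulVec, dotProduct, hu0, mul_add, Finset.sum_add_distrib, mul_ite,
      mul_one, mul_zero]
    rw [Finset.sum_ite_eq' Finset.univ c (fun w => B i w * t)]
    simp [Finset.sum_ite_mem, mul_comm, hf, hS]
  have hBr : ∀ i, (B *ᵥ r0) i = S i - f i := by
    intro i
    simp only [Matrix.mulVec, dotProduct, hr0, mul_sub, Finset.sum_sub_distrib, mul_ite,
      mul_one, mul_zero]
    rw [Finset.sum_ite_eq' Finset.univ c (fun w => B i w)]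
    simp [Finset.sum_ite_mem, hf, hS]
  have hBx : ∀ v ∈ L, ∀ i, (B *ᵥ x v) i = f i + B i v := by
    intro v hv i
    simp only [Matrix.mulVec, dotProduct, hx, mul_add, Finset.sum_add_distrib, mul_ite,
      mul_one, mul_zero]
    rw [Finset.sum_ite_eq' Finset.univ c (fun w => B i w),
      Finset.sum_ite_eq' Finset.univ v (fun w => B i w)]
    simp [hf]
  have hqu : u0 ⬝ᵥ (N *ᵥ u0) = ∑ i, (t * f i + S i)^2 := by
    rw [quad_eq_sum_sq hB]; exact Finset.sum_congr rfl fun i _ => by rw [hBu]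
  have hqr : r0 ⬝ᵥ (N *ᵥ r0) = ∑ i, (S i - f i)^2 := by
    rw [quad_eq_sum_sq hB]; exact Finset.sum_congr rfl fun i _ => by rw [hBr]
  have hqx : ∀ v ∈ L, (x v) ⬝ᵥ (N *ᵥ (x v)) = ∑ i, (f i + B i v)^2 := by
    intro v hv
    rw [quad_eq_sum_sq hB]; exact Finset.sum_congr rfl fun i _ => by rw [hBx v hv]
  have hNdiag : ∀ v, N v v = ∑ i, (B i v)^2 := by
    intro v; rw [hB]; simp [Matrix.mul_apply, sq]
  set T' : ℝ := N c c + ∑ v ∈ L, N v v with hT'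
  have hT'sum : T' = ∑ i, ((f i)^2 + Q i) := by
    rw [hT', hNdiag, Finset.sum_congr rfl (fun v _ => hNdiag v), Finset.sum_comm,
      ← Finset.sum_add_distrib]
  have hu0sq : u0 ⬝ᵥ u0 = t^2 + t := by
    simp only [dotProduct, hu0]
    have key : ∀ w, (t * (if w = c then 1 else 0) + (if w ∈ L then 1 else 0)) *
        (t * (if w = c then 1 else 0) + (if w ∈ L then 1 else 0)) =
        t^2 * (if w = c then 1 else 0) + (if w ∈ L then 1 else 0) := by
      intro w
      by_cases h1 : w = c
      · subst h1; simp [hc, sq]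
      · by_cases h2 : w ∈ L <;> simp [h1, h2]
    rw [Finset.sum_congr rfl fun w _ => key w, Finset.sum_add_distrib]
    simp [Finset.sum_ite_eq', mul_comm, htdef]
  have hA2 : u0 ⬝ᵥ (N *ᵥ u0) ≤ t^2 + t := by
    have h0 : 0 ≤ u0 ⬝ᵥ (M *ᵥ u0) := by simpa using hM.dotProduct_mulVec_nonneg u0
    have heq : u0 ⬝ᵥ (N *ᵥ u0) = u0 ⬝ᵥ u0 - u0 ⬝ᵥ (M *ᵥ u0) := by
      rw [hNdef, Matrix.sub_mulVec, dotProduct_sub, Matrix.one_mulVec]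
    rw [heq, hu0sq]; linarith
  have hA1 : 0 ≤ u0 ⬝ᵥ (N *ᵥ u0) := by simpa using hN.dotProduct_mulVec_nonneg u0
  have hB1 : 0 ≤ r0 ⬝ᵥ (N *ᵥ r0) := by simpa using hN.dotProduct_mulVec_nonneg r0
  have h4 : u0 ⬝ᵥ (N *ᵥ u0) + t * (r0 ⬝ᵥ (N *ᵥ r0)) ≤ t*(t+1)*T' := by
    rw [hqu, hqr, hT'sum, Finset.mul_sum, ← Finset.sum_add_distrib, Finset.mul_sum]
    apply Finset.sum_le_sum
    intro i _
    have hCS : (S i)^2 ≤ t * Q i := by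
      have := sq_sum_le_card_mul_sum_sq (s := L) (f := fun v => B i v)
      simpa [hS, hQ, htdef] using this
    exact row_ineq t (f i) (S i) (Q i) ht hCS
  have hexp : ∀ i, ∑ v ∈ L, (f i + B i v)^2 = t * (f i)^2 + 2 * f i * S i + Q i := by
    intro i
    have key : ∀ v, (f i + B i v)^2 = (f i)^2 + (2 * f i * B i v + (B i v)^2) := fun v => by ring
    rw [Finset.sum_congr rfl fun v _ => key v, Finset.sum_add_distrib, Finset.sum_add_distrib,
      Finset.sum_const]
    have : ∑ v ∈ L, 2 * f i * B i v = 2 * f i * S i := by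
      rw [hS]; rw [Finset.mul_sum]
    rw [this]
    simp [hQ, htdef, nsmul_eq_mul]
    ring
  have h5 : (t+1) * (∑ v ∈ L, (x v) ⬝ᵥ (N *ᵥ (x v))) =
      (t+1)*T' + u0 ⬝ᵥ (N *ᵥ u0) - r0 ⬝ᵥ (N *ᵥ r0) := by
    have lhs : (t+1) * (∑ v ∈ L, (x v) ⬝ᵥ (N *ᵥ (x v))) =
        ∑ i, (t+1)*(t*(f i)^2 + 2*f i*S i + Q i) := by
      rw [Finset.sum_congr rfl hqx, Finset.sum_comm, Finset.sum_congr rfl fun i _ => hexp i,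
        Finset.mul_sum]
    have rhs : (t+1)*T' + u0 ⬝ᵥ (N *ᵥ u0) - r0 ⬝ᵥ (N *ᵥ r0) =
        ∑ i, ((t+1)*((f i)^2 + Q i) + (t*f i + S i)^2 - (S i - f i)^2) := by
      rw [hqu, hqr, hT'sum, Finset.mul_sum, ← Finset.sum_add_distrib, ← Finset.sum_sub_distrib]
    rw [lhs, rhs]
    exact Finset.sum_congr rfl fun i _ => by ring
  -- relate M-quantities to N-quantities
  have hMcc : M c c = 1 - N c c := by
    have : N c c = 1 - M c c := by simp [hNdef, Matrix.sub_apply, Matrix.one_apply]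
    linarith
  have hML : ∑ v ∈ L, M v v = t - ∑ v ∈ L, N v v := by
    have : ∀ v ∈ L, N v v = 1 - M v v := by
      intro v _; simp [hNdef, Matrix.sub_apply, Matrix.one_apply]
    rw [Finset.sum_congr rfl this, Finset.sum_sub_distrib]
    simp [htdef]
  have hqmx : ∀ v ∈ L, (x v) ⬝ᵥ (M *ᵥ (x v)) = 2 - (x v) ⬝ᵥ (N *ᵥ (x v)) := by
    intro v hv
    have hvc : v ≠ c := fun h => hc (h ▸ hv)
    have hxx : (x v) ⬝ᵥ (x v) = 2 := by
      simp only [dotProduct, hx]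
      have key : ∀ w, ((if w = c then (1:ℝ) else 0) + (if w = v then 1 else 0)) *
          ((if w = c then (1:ℝ) else 0) + (if w = v then 1 else 0)) =
          (if w = c then (1:ℝ) else 0) + (if w = v then 1 else 0) := by
        intro w
        by_cases h1 : w = c
        · subst h1; simp [Ne.symm hvc]
        · by_cases h2 : w = v <;> simp [h1, h2, hvc]
      rw [Finset.sum_congr rfl fun w _ => key w, Finset.sum_add_distrib]
      simp [Finset.sum_ite_eq']
      norm_num
    have heq : (x v) ⬝ᵥ (N *ᵥ (x v)) = (x v) ⬝ᵥ (x v) - (x v) ⬝ᵥ (M *ᵥ (x v)) := by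
      rw [hNdef, Matrix.sub_mulVec, dotProduct_sub, Matrix.one_mulVec]
    rw [heq, hxx]; ring
  have hRHS : ∑ v ∈ L, (x v) ⬝ᵥ (M *ᵥ (x v)) = 2*t - ∑ v ∈ L, (x v) ⬝ᵥ (N *ᵥ (x v)) := by
    rw [Finset.sum_congr rfl hqmx, Finset.sum_sub_distrib]
    simp [htdef]
    ring
  have hgoal : ∑ v ∈ L, (x v) ⬝ᵥ (M *ᵥ (x v)) ≥ 2 * (M c c + ∑ v ∈ L, M v v) - (t + 1) := by
    rw [hRHS, hMcc, hML]
    set qA := u0 ⬝ᵥ (N *ᵥ u0)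
    set qB := r0 ⬝ᵥ (N *ᵥ r0)
    set Sq := ∑ v ∈ L, (x v) ⬝ᵥ (N *ᵥ (x v))
    have htpos : (0:ℝ) < t := by linarith
    nlinarith [mul_nonneg (by linarith : (0:ℝ) ≤ t - 1) (by linarith : (0:ℝ) ≤ t^2 + t - qA),
      mul_nonneg htpos.le hB1, h4, h5, hA1]
  exact hgoal


lemma exists_star_forest {V : Type*} [Fintype V] [DecidableEq V] (G : SimpleGraph V)
    [DecidableRel G.Adj] (hdeg : ∀ v, 0 < G.degree v) :
    ∃ (C : Finset V) (g : V → V),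
      (∀ v, v ∉ C → g v ∈ C ∧ G.Adj (g v) v) ∧ (∀ c ∈ C, ∃ v, v ∉ C ∧ g v = c) := by
  classical
  -- matchings
  let isM : Finset (Sym2 V) → Prop := fun Ms =>
    Ms ⊆ G.edgeFinset ∧ ∀ e ∈ Ms, ∀ f ∈ Ms, e ≠ f → ∀ v, v ∈ e → v ∉ f
  have hne : (G.edgeFinset.powerset.filter isM).Nonempty :=
    ⟨∅, by simp [isM]⟩
  obtain ⟨Mm, hMmem, hMmax⟩ :=
    Finset.exists_max_image (G.edgeFinset.powerset.filter isM) Finset.card hne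
  rw [Finset.mem_filter, Finset.mem_powerset] at hMmem
  have hMsub := hMmem.1
  have hMdisj := hMmem.2.2
  -- coverage
  let covered : V → Prop := fun v => ∃ e, e ∈ Mm ∧ v ∈ e
  -- a neighbor for each vertex
  have hnb : ∀ v, ∃ w, G.Adj v w := by
    intro v
    have := hdeg v
    rw [← SimpleGraph.card_neighborFinset_eq_degree, Finset.card_pos] at this
    obtain ⟨w, hw⟩ := this
    exact ⟨w, by simpa using hw⟩
  let nb : V → V := fun v => (hnb v).choose
  have hnbAdj : ∀ v, G.Adj v (nb v) := fun v => (hnb v).choose_spec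
  -- maximality: an uncovered vertex has all neighbors covered
  have key : ∀ v w, ¬ covered v → G.Adj v w → covered w := by
    intro v w hv hadj
    by_contra hw
    have hvw : v ≠ w := G.ne_of_adj hadj
    have hnotmem : s(v, w) ∉ Mm := fun hmem => hv ⟨s(v, w), hmem, by simp⟩
    have hins : insert s(v, w) Mm ∈ G.edgeFinset.powerset.filter isM := by
      rw [Finset.mem_filter, Finset.mem_powerset]
      refine ⟨Finset.insert_subset (by simpa using hadj) hMsub, ?_, ?_⟩
      · exact Finset.insert_subset (by simpa using hadj) hMsub
      · intro e he f hf hef x hxe hxf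
        rcases Finset.mem_insert.mp he with he1 | he2 <;>
          rcases Finset.mem_insert.mp hf with hf1 | hf2
        · exact hef (he1.trans hf1.symm)
        · subst he1
          rcases Sym2.mem_iff.mp hxe with rfl | rfl
          · exact hv ⟨f, hf2, hxf⟩
          · exact hw ⟨f, hf2, hxf⟩
        · subst hf1
          rcases Sym2.mem_iff.mp hxf with rfl | rfl
          · exact hv ⟨e, he2, hxe⟩
          · exact hw ⟨e, he2, hxe⟩
        · exact hMdisj e he2 f hf2 hef x hxe hxf
    have := hMmax _ hins
    rw [Finset.card_insert_of_notMem hnotmem] at this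
    omega
  -- matched edge and partner
  let me : V → Sym2 V := fun v => if h : covered v then h.choose else s(v, v)
  have hme : ∀ v, covered v → me v ∈ Mm ∧ v ∈ me v := by
    intro v h
    simp only [me, dif_pos h]
    exact h.choose_spec
  have hmeUniq : ∀ v, ∀ e ∈ Mm, v ∈ e → e = me v := by
    intro v e he hv
    have hcov : covered v := ⟨e, he, hv⟩
    by_contra hne'
    exact hMdisj e he (me v) (hme v hcov).1 hne' v hv (hme v hcov).2
  let partner : V → V := fun v => if h : covered v then Sym2.Mem.other' (hme v h).2 else v
  have hpartner : ∀ v, covered v → s(v, partner v) = me v := by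
    intro v h
    simp only [partner, dif_pos h]
    exact Sym2.other_spec' (hme v h).2
  have hpAdj : ∀ v, covered v → G.Adj v (partner v) := by
    intro v h
    have h1 : s(v, partner v) ∈ G.edgeFinset := by
      rw [hpartner v h]; exact hMsub (hme v h).1
    simpa using h1
  have hpne : ∀ v, covered v → partner v ≠ v := by
    intro v h
    exact Ne.symm (G.ne_of_adj (hpAdj v h))
  have hpcov : ∀ v, covered v → covered (partner v) := by
    intro v h
    exact ⟨me v, (hme v h).1, by rw [← hpartner v h]; simp⟩
  have hmep : ∀ v, covered v → me (partner v) = me v := by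
    intro v h
    have h1 : partner v ∈ me v := by rw [← hpartner v h]; simp
    exact (hmeUniq (partner v) (me v) (hme v h).1 h1).symm
  have hpp : ∀ v, covered v → partner (partner v) = v := by
    intro v h
    have hcp : covered (partner v) := hpcov v h
    have h1 : s(partner v, partner (partner v)) = s(v, partner v) := by
      rw [hpartner _ hcp, hmep v h, hpartner v h]
    rcases Sym2.eq_iff.mp h1 with ⟨h2, _⟩ | ⟨_, h2⟩
    · exact absurd h2 (hpne v h)
    · exact h2
  -- picking a canonical endpoint of each edge
  have hex : ∀ e : Sym2 V, ∃ a, a ∈ e := fun e =>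
    Sym2.ind (fun a b => ⟨a, Sym2.mem_mk_left a b⟩) e
  let pick : Sym2 V → V := fun e => (hex e).choose
  have hpick : ∀ e : Sym2 V, pick e ∈ e := fun e => (hex e).choose_spec
  have hpickme : ∀ v, covered v → pick (me v) = v ∨ pick (me v) = partner v := by
    intro v h
    have hmem : pick (me v) ∈ s(v, partner v) := by
      rw [hpartner v h]; exact hpick (me v)
    exact Sym2.mem_iff.mp hmem
  -- leaves
  let hasLeaf : V → Prop := fun u => ∃ v, ¬ covered v ∧ nb v = u
  set C : Finset V := Finset.univ.filter (fun u => covered u ∧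
    (hasLeaf u ∨ (¬ hasLeaf u ∧ ¬ hasLeaf (partner u) ∧ pick (me u) = u))) with hC
  have hmemC : ∀ u, u ∈ C ↔ covered u ∧
      (hasLeaf u ∨ (¬ hasLeaf u ∧ ¬ hasLeaf (partner u) ∧ pick (me u) = u)) := by
    intro u; simp [hC]
  refine ⟨C, fun v => if covered v then partner v else nb v, ?_, ?_⟩
  · intro v hv
    by_cases h : covered v
    · simp only [if_pos h]
      -- v covered, not in C
      rw [hmemC, not_and_or] at hv
      have hv2 : ¬ (hasLeaf v ∨ (¬ hasLeaf v ∧ ¬ hasLeaf (partner v) ∧ pick (me v) = v)) := by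
        rcases hv with hv1 | hv2
        · exact absurd h hv1
        · exact hv2
      push_neg at hv2
      obtain ⟨hnl, hv3⟩ := hv2
      constructor
      · rw [hmemC]
        refine ⟨hpcov v h, ?_⟩
        by_cases hlp : hasLeaf (partner v)
        · exact Or.inl hlp
        · have hpickv : pick (me v) = partner v := by
            rcases hpickme v h with h1 | h1
            · exact absurd h1 (hv3 hnl hlp)
            · exact h1
          refine Or.inr ⟨hlp, ?_, ?_⟩
          · rw [hpp v h]; exact hnl
          · rw [hmep v h, hpickv]
      · exact (hpAdj v h).symm
    · simp only [if_neg h]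
      constructor
      · rw [hmemC]
        exact ⟨key v (nb v) h (hnbAdj v), Or.inl ⟨v, h, rfl⟩⟩
      · exact (hnbAdj v).symm
  · intro c hc
    rw [hmemC] at hc
    obtain ⟨hcov, hdisj⟩ := hc
    rcases hdisj with ⟨v₀, hv₀, hnb₀⟩ | ⟨hnl, hnlp, hpickc⟩
    · refine ⟨v₀, ?_, ?_⟩
      · rw [hmemC]; intro hmem; exact hv₀ hmem.1
      · show (if covered v₀ then partner v₀ else nb v₀) = c
        rw [if_neg hv₀]; exact hnb₀
    · refine ⟨partner c, ?_, ?_⟩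
      · rw [hmemC]
        rintro ⟨hcovp, hd⟩
        rcases hd with hlp | ⟨_, _, hpickp⟩
        · exact hnlp hlp
        · rw [hmep c hcov, hpickc] at hpickp
          exact hpne c hcov hpickp.symm
      · show (if covered (partner c) then partner (partner c) else nb (partner c)) = c
        rw [if_pos (hpcov c hcov)]
        exact hpp c hcov

lemma multiset_exists_le_map {α β : Type*} [DecidableEq α] [DecidableEq β] {f : α → β} {s : Multiset β} :
    ∀ {t : Multiset α}, s ≤ t.map f → ∃ u, u ≤ t ∧ u.map f = s := by
  induction s using Multiset.induction_on with
  | empty => exact fun _ => ⟨0, Multiset.zero_le _, rfl⟩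
  | cons a s ih =>
    intro t h
    have ha : a ∈ t.map f := Multiset.mem_of_le h (Multiset.mem_cons_self a s)
    obtain ⟨x, hx, hfx⟩ := Multiset.mem_map.mp ha
    have hs : s ≤ (t.erase x).map f := by
      have h1 : (a ::ₘ s).erase a ≤ (t.map f).erase a := Multiset.erase_le_erase a h
      rw [Multiset.erase_cons_head] at h1
      have h2 : (t.map f).erase a = (t.erase x).map f := by
        conv_lhs => rw [← Multiset.cons_erase hx]
        rw [Multiset.map_cons, hfx, Multiset.erase_cons_head]
      rwa [h2] at h1
    obtain ⟨u, hu, hmap⟩ := ih hs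
    refine ⟨x ::ₘ u, ?_, by simp [hmap, hfx]⟩
    rw [← Multiset.cons_erase hx]
    exact Multiset.cons_le_cons _ hu

lemma sumKLargest_eq_sum_subset {V : Type*} [Fintype V] [DecidableEq V] (lam : V → ℝ) (k : ℕ)
    (hk : k ≤ Fintype.card V) :
    ∃ T : Finset V, T.card = k ∧ sumKLargest lam k = ∑ i ∈ T, lam i := by
  classical
  set l0 : List ℝ := (Finset.univ.val.map lam).toList with hl0
  set sorted : List ℝ := l0.mergeSort (fun a b => decide (b ≤ a)) with hsorted
  have hperm : sorted.Perm l0 := List.mergeSort_perm l0 _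
  have hsub : (sorted.take k).Sublist sorted := List.take_sublist k sorted
  have hlen : sorted.length = Fintype.card V := by
    rw [hsorted, List.length_mergeSort, hl0, Multiset.length_toList]
    simp [Finset.card_univ]
  have hle : ((sorted.take k : List ℝ) : Multiset ℝ) ≤ (Finset.univ.val.map lam) := by
    calc ((sorted.take k : List ℝ) : Multiset ℝ) ≤ (sorted : Multiset ℝ) :=
          Multiset.coe_le.mpr hsub.subperm
      _ = (l0 : Multiset ℝ) := Multiset.coe_eq_coe.mpr hperm
      _ = Finset.univ.val.map lam := by rw [hl0, Multiset.coe_toList]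
  obtain ⟨u, hu, humap⟩ := multiset_exists_le_map hle
  have hnodup : u.Nodup := Multiset.nodup_of_le hu Finset.univ.nodup
  refine ⟨⟨u, hnodup⟩, ?_, ?_⟩
  · have h1 := congrArg Multiset.card humap
    simp [List.length_take, hlen] at h1
    simp [Finset.card_mk]
    omega
  · have h2 : sumKLargest lam k = ((sorted.take k : List ℝ) : Multiset ℝ).sum := by
      rw [sumKLargest]
      simp [hsorted, hl0]
    rw [h2, ← humap]
    simp [Finset.sum]

noncomputable def edgeVec {V : Type*} [Fintype V] [DecidableEq V] (e : Sym2 V) : V → ℝ :=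
  fun w => if w ∈ e then 1 else 0

lemma trace_mul_vecMulVec {V : Type*} [Fintype V] (A : Matrix V V ℝ) (x : V → ℝ) :
    (A * Matrix.vecMulVec x x).trace = x ⬝ᵥ (A *ᵥ x) := by
  simp only [Matrix.trace, Matrix.diag, Matrix.mul_apply, Matrix.vecMulVec_apply,
    dotProduct, Matrix.mulVec]
  refine Finset.sum_congr rfl fun i _ => ?_
  rw [Finset.mul_sum]
  exact Finset.sum_congr rfl fun j _ => by ring

lemma edgeVec_pair {V : Type*} [Fintype V] [DecidableEq V] (v c : V) (h : v ≠ c) :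
    edgeVec s(v, c) = fun w => (if w = c then (1:ℝ) else 0) + (if w = v then 1 else 0) := by
  funext w
  simp only [edgeVec, Sym2.mem_iff]
  by_cases h1 : w = v
  · by_cases h2 : w = c
    · exact absurd (h1.symm.trans h2) h
    · simp [h1, h2, h]
  · by_cases h2 : w = c <;> simp [h1, h2, Ne.symm h]

lemma signlessLap_apply_self {V : Type*} [Fintype V] [DecidableEq V] (G : SimpleGraph V)
    [DecidableRel G.Adj] (v : V) : signlessLap G v v = (G.degree v : ℝ) := by
  classical
  simp [signlessLap, SimpleGraph.degMatrix, Matrix.add_apply, Matrix.diagonal_apply_eq]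
  congr!

lemma signlessLap_eq_sum {V : Type*} [Fintype V] [DecidableEq V] (G : SimpleGraph V)
    [DecidableRel G.Adj] :
    signlessLap G = ∑ e ∈ G.edgeFinset, Matrix.vecMulVec (edgeVec e) (edgeVec e) := by
  classical
  ext v w
  rw [Matrix.sum_apply]
  rw [Finset.sum_congr rfl (fun e _ => Matrix.vecMulVec_apply _ _ _ _)]
  by_cases hvw : v = w
  · subst hvw
    have key : ∀ e, edgeVec e v * edgeVec e v = if v ∈ e then (1:ℝ) else 0 := by
      intro e; by_cases h : v ∈ e <;> simp [edgeVec, h]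
    rw [Finset.sum_congr rfl fun e _ => key e, Finset.sum_boole]
    rw [← SimpleGraph.incidenceFinset_eq_filter, SimpleGraph.card_incidenceFinset_eq_degree]
    rw [signlessLap_apply_self]
  · have key : ∀ e, edgeVec e v * edgeVec e w = if v ∈ e ∧ w ∈ e then (1:ℝ) else 0 := by
      intro e
      by_cases h1 : v ∈ e <;> by_cases h2 : w ∈ e <;> simp [edgeVec, h1, h2]
    rw [Finset.sum_congr rfl fun e _ => key e, Finset.sum_boole]
    have hL : signlessLap G v w = if G.Adj v w then (1:ℝ) else 0 := by
      simp [signlessLap, SimpleGraph.degMatrix, Matrix.add_apply,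
        Matrix.diagonal_apply_ne _ hvw]
    rw [hL]
    by_cases hadj : G.Adj v w
    · have hfilter : G.edgeFinset.filter (fun e => v ∈ e ∧ w ∈ e) = {s(v, w)} := by
        ext e
        simp only [Finset.mem_filter, SimpleGraph.mem_edgeFinset, Finset.mem_singleton]
        constructor
        · rintro ⟨hE, hv, hw⟩
          exact (Sym2.mem_and_mem_iff hvw).mp ⟨hv, hw⟩
        · rintro rfl
          exact ⟨hadj, by simp, by simp⟩
      rw [hfilter]
      simp [hadj]
    · have hfilter : G.edgeFinset.filter (fun e => v ∈ e ∧ w ∈ e) = ∅ := by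
        ext e
        simp only [Finset.mem_filter, SimpleGraph.mem_edgeFinset, Finset.notMem_empty,
          iff_false, not_and]
        intro hE hv hw
        have := (Sym2.mem_and_mem_iff hvw).mp ⟨hv, hw⟩
        subst this
        exact hadj (G.mem_edgeSet.mp hE)
      rw [hfilter]
      simp [hadj]


/-- For a graph `G` with `n` vertices and no isolated vertices, and any `1 ≤ k ≤ n`,
`S⁺_k(G) ≤ 2e(G) + 2k − n`. -/
theorem splus_le_of_no_isolated {n : ℕ} (G : SimpleGraph (Fin n))
    [DecidableRel G.Adj] (hiso : ∀ v, 0 < G.degree v)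
    (k : ℕ) (hk1 : 1 ≤ k) (hkn : k ≤ n) :
    Splus G k ≤ 2 * (numEdges G : ℝ) + 2 * k - n := by
  classical
  have hherm := signlessLap_isHermitian G
  set lam : Fin n → ℝ := hherm.eigenvalues with hlam
  obtain ⟨T, hTcard, hTsum⟩ := sumKLargest_eq_sum_subset lam k (by simpa using hkn)
  set U : Matrix (Fin n) (Fin n) ℝ := (hherm.eigenvectorUnitary : Matrix (Fin n) (Fin n) ℝ)
    with hU
  obtain ⟨hU1, hU2⟩ : star U * U = 1 ∧ U * star U = 1 :=
    Unitary.mem_iff.mp hherm.eigenvectorUnitary.prop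
  have hspec : signlessLap G = U * Matrix.diagonal lam * star U := by
    have := hherm.spectral_theorem
    rw [Unitary.conjStarAlgAut_apply] at this
    exact this
  set d1 : Fin n → ℝ := fun i => if i ∈ T then 0 else 1 with hd1
  set d2 : Fin n → ℝ := fun i => if i ∈ T then 1 else 0 with hd2
  set P' : Matrix (Fin n) (Fin n) ℝ := U * Matrix.diagonal d1 * star U with hP'
  have hP'psd : P'.PosSemidef := by
    have hdpsd : (Matrix.diagonal d1).PosSemidef :=
      Matrix.posSemidef_diagonal_iff.mpr fun i => by by_cases h : i ∈ T <;> simp [hd1, h]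
    have := hdpsd.mul_mul_conjTranspose_same U
    simpa [Matrix.star_eq_conjTranspose, hP'] using this
  have hcompl : (1 : Matrix (Fin n) (Fin n) ℝ) - P' = U * Matrix.diagonal d2 * star U := by
    have hsum : Matrix.diagonal d1 + Matrix.diagonal d2 = 1 := by
      rw [Matrix.diagonal_add]
      have hfun : (fun i => d1 i + d2 i) = fun _ => (1:ℝ) := by
        funext i; by_cases h : i ∈ T <;> simp [hd1, hd2, h]
      rw [hfun, Matrix.diagonal_one]
    have hkey : P' + U * Matrix.diagonal d2 * star U = 1 := by
      rw [hP']
      calc U * Matrix.diagonal d1 * star U + U * Matrix.diagonal d2 * star U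
          = U * (Matrix.diagonal d1 + Matrix.diagonal d2) * star U := by
            rw [Matrix.mul_add, Matrix.add_mul]
        _ = 1 := by rw [hsum, Matrix.mul_one, hU2]
    rw [← hkey, add_sub_cancel_left]
  have h1P'psd : ((1 : Matrix (Fin n) (Fin n) ℝ) - P').PosSemidef := by
    rw [hcompl]
    have hdpsd : (Matrix.diagonal d2).PosSemidef :=
      Matrix.posSemidef_diagonal_iff.mpr fun i => by by_cases h : i ∈ T <;> simp [hd2, h]
    simpa [Matrix.star_eq_conjTranspose] using hdpsd.mul_mul_conjTranspose_same U
  have traceUDU : ∀ d : Fin n → ℝ, (U * Matrix.diagonal d * star U).trace = ∑ i, d i := by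
    intro d
    rw [Matrix.trace_mul_cycle, hU1, Matrix.one_mul, Matrix.trace_diagonal]
  have htraceP' : P'.trace = (n : ℝ) - k := by
    rw [hP', traceUDU]
    have hd : ∀ i, d1 i = 1 - (if i ∈ T then (1:ℝ) else 0) := fun i => by
      by_cases h : i ∈ T <;> simp [hd1, h]
    rw [Finset.sum_congr rfl fun i _ => hd i, Finset.sum_sub_distrib, Finset.sum_boole]
    have h1 : Finset.univ.filter (fun i => i ∈ T) = T := by
      rw [Finset.filter_mem_eq_inter, Finset.univ_inter]
    rw [h1, hTcard]
    simp
  have hPQ : P' * signlessLap G = U * Matrix.diagonal (fun i => d1 i * lam i) * star U := by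
    rw [hP']
    conv_lhs => rw [hspec]
    calc (U * Matrix.diagonal d1 * star U) * (U * Matrix.diagonal lam * star U)
        = U * (Matrix.diagonal d1 * ((star U * U) * (Matrix.diagonal lam * star U))) := by
          simp only [Matrix.mul_assoc]
      _ = U * (Matrix.diagonal d1 * Matrix.diagonal lam) * star U := by
          rw [hU1, Matrix.one_mul]
          simp only [Matrix.mul_assoc]
      _ = U * Matrix.diagonal (fun i => d1 i * lam i) * star U := by
          rw [Matrix.diagonal_mul_diagonal]
  have htracePQ : (P' * signlessLap G).trace = ∑ i, d1 i * lam i := by rw [hPQ, traceUDU]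
  have htraceQ : (signlessLap G).trace = ∑ i, lam i := by
    conv_lhs => rw [hspec]
    rw [traceUDU]
  have hsplit : ∑ i ∈ T, lam i = (signlessLap G).trace - (P' * signlessLap G).trace := by
    rw [htraceQ, htracePQ]
    have h1 : ∑ i, d1 i * lam i = ∑ i ∈ Finset.univ.filter (fun i => ¬ i ∈ T), lam i := by
      rw [Finset.sum_filter]
      exact Finset.sum_congr rfl fun i _ => by by_cases h : i ∈ T <;> simp [hd1, h]
    have h2 : ∑ i ∈ T, lam i = ∑ i ∈ Finset.univ.filter (fun i => i ∈ T), lam i := by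
      congr 1
      rw [Finset.filter_mem_eq_inter, Finset.univ_inter]
    rw [h1, h2, ← Finset.sum_filter_add_sum_filter_not Finset.univ (fun i => i ∈ T) lam]
    ring
  have hnumEdges : numEdges G = G.edgeFinset.card := by
    rw [numEdges, Set.ncard_eq_toFinset_card']
    simp [SimpleGraph.edgeFinset]
  have htraceQ2 : (signlessLap G).trace = 2 * (numEdges G : ℝ) := by
    have h1 : (signlessLap G).trace = ∑ v, (G.degree v : ℝ) := by
      rw [Matrix.trace]
      exact Finset.sum_congr rfl fun v _ => signlessLap_apply_self G v
    rw [h1, ← Nat.cast_sum, SimpleGraph.sum_degrees_eq_twice_card_edges, hnumEdges]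
    push_cast
    ring
  -- the star forest and the lower bound on the trace of P' * Q
  obtain ⟨C, g, hg1, hg2⟩ := exists_star_forest G hiso
  have hquad_nonneg : ∀ x : Fin n → ℝ, 0 ≤ x ⬝ᵥ (P' *ᵥ x) := fun x => by simpa using hP'psd.dotProduct_mulVec_nonneg x
  have hdecomp : (P' * signlessLap G).trace
      = ∑ e ∈ G.edgeFinset, (edgeVec e) ⬝ᵥ (P' *ᵥ (edgeVec e)) := by
    rw [signlessLap_eq_sum G, Finset.mul_sum, Matrix.trace_sum]
    exact Finset.sum_congr rfl fun e _ => trace_mul_vecMulVec _ _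
  set W : Finset (Fin n) := Finset.univ \ C with hW
  have hvnotinC : ∀ v ∈ W, v ∉ C := fun v hv => (Finset.mem_sdiff.mp hv).2
  have hmaps : ∀ v ∈ W, g v ∈ C := fun v hv => (hg1 v (hvnotinC v hv)).1
  have hadj : ∀ v ∈ W, G.Adj (g v) v := fun v hv => (hg1 v (hvnotinC v hv)).2
  have hlower1 : ∑ v ∈ W, (edgeVec s(v, g v)) ⬝ᵥ (P' *ᵥ (edgeVec s(v, g v)))
      ≤ ∑ e ∈ G.edgeFinset, (edgeVec e) ⬝ᵥ (P' *ᵥ (edgeVec e)) := by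
    have hinj : ∀ a ∈ W, ∀ b ∈ W, (fun v => s(v, g v)) a = (fun v => s(v, g v)) b → a = b := by
      intro a ha b hb hab
      simp only at hab
      rcases Sym2.eq_iff.mp hab with ⟨h1, _⟩ | ⟨h1, _⟩
      · exact h1
      · exact absurd (h1 ▸ hmaps b hb) (hvnotinC a ha)
    have himg : ∑ e ∈ W.image (fun v => s(v, g v)), (edgeVec e) ⬝ᵥ (P' *ᵥ (edgeVec e))
        = ∑ v ∈ W, (edgeVec s(v, g v)) ⬝ᵥ (P' *ᵥ (edgeVec s(v, g v))) :=
      Finset.sum_image hinj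
    calc ∑ v ∈ W, (edgeVec s(v, g v)) ⬝ᵥ (P' *ᵥ (edgeVec s(v, g v)))
        = ∑ e ∈ W.image (fun v => s(v, g v)), (edgeVec e) ⬝ᵥ (P' *ᵥ (edgeVec e)) := himg.symm
      _ ≤ ∑ e ∈ G.edgeFinset, (edgeVec e) ⬝ᵥ (P' *ᵥ (edgeVec e)) := by
          apply Finset.sum_le_sum_of_subset_of_nonneg
          · intro e he
            obtain ⟨v, hv, rfl⟩ := Finset.mem_image.mp he
            rw [SimpleGraph.mem_edgeFinset]
            exact (hadj v hv).symm
          · intro e _ _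
            exact hquad_nonneg _
  have hfiber : ∑ v ∈ W, (edgeVec s(v, g v)) ⬝ᵥ (P' *ᵥ (edgeVec s(v, g v)))
      = ∑ c ∈ C, ∑ v ∈ W.filter (fun v => g v = c),
          (edgeVec s(v, g v)) ⬝ᵥ (P' *ᵥ (edgeVec s(v, g v))) :=
    (Finset.sum_fiberwise_of_maps_to hmaps _).symm
  have hstar : ∀ c ∈ C,
      2 * (P' c c + ∑ v ∈ W.filter (fun v => g v = c), P' v v)
        - (((W.filter (fun v => g v = c)).card : ℝ) + 1)
      ≤ ∑ v ∈ W.filter (fun v => g v = c),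
          (edgeVec s(v, g v)) ⬝ᵥ (P' *ᵥ (edgeVec s(v, g v))) := by
    intro c hc
    have hcL : c ∉ W.filter (fun v => g v = c) := fun h =>
      (hvnotinC c (Finset.mem_filter.mp h).1) hc
    have hLne : (W.filter (fun v => g v = c)).Nonempty := by
      obtain ⟨v, hvC, hgv⟩ := hg2 c hc
      exact ⟨v, Finset.mem_filter.mpr
        ⟨Finset.mem_sdiff.mpr ⟨Finset.mem_univ v, hvC⟩, hgv⟩⟩
    have hSQ := star_quad P' hP'psd h1P'psd c (W.filter (fun v => g v = c)) hcL hLne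
    refine le_trans hSQ (le_of_eq ?_)
    apply Finset.sum_congr rfl
    intro v hv
    have hgvc : g v = c := (Finset.mem_filter.mp hv).2
    have hvc : v ≠ c := fun h => (hvnotinC v (Finset.mem_filter.mp hv).1) (h ▸ hc)
    rw [show s(v, g v) = s(v, c) by rw [hgvc], edgeVec_pair v c hvc]
  have hcardWC : W.card + C.card = n := by
    rw [hW, Finset.card_sdiff_of_subset (Finset.subset_univ C)]
    have h1 := Finset.card_le_card (Finset.subset_univ C)
    simp only [Finset.card_univ, Fintype.card_fin] at h1 ⊢
    omega
  have hcount : ∑ c ∈ C, (((W.filter (fun v => g v = c)).card : ℝ) + 1) = n := by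
    rw [Finset.sum_add_distrib, Finset.sum_const, ← Nat.cast_sum,
      ← Finset.card_eq_sum_card_fiberwise hmaps]
    rw [nsmul_eq_mul, mul_one]
    rw [← Nat.cast_add]
    exact_mod_cast congrArg (Nat.cast (R := ℝ)) hcardWC
  have hdiag : ∑ c ∈ C, (P' c c + ∑ v ∈ W.filter (fun v => g v = c), P' v v) = P'.trace := by
    rw [Finset.sum_add_distrib, Finset.sum_fiberwise_of_maps_to hmaps (fun v => P' v v)]
    rw [Matrix.trace, ← Finset.sum_sdiff (Finset.subset_univ C)]
    rw [← hW]
    rw [add_comm]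
    rfl
  have hmain : (n : ℝ) - 2 * k ≤ (P' * signlessLap G).trace := by
    rw [hdecomp]
    have heq1 : (n:ℝ) - 2*k = ∑ c ∈ C,
        (2 * (P' c c + ∑ v ∈ W.filter (fun v => g v = c), P' v v)
          - (((W.filter (fun v => g v = c)).card : ℝ) + 1)) := by
      rw [Finset.sum_sub_distrib, ← Finset.mul_sum, hdiag, hcount, htraceP']
      ring
    rw [heq1]
    calc ∑ c ∈ C, (2 * (P' c c + ∑ v ∈ W.filter (fun v => g v = c), P' v v)
          - (((W.filter (fun v => g v = c)).card : ℝ) + 1))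
        ≤ ∑ c ∈ C, ∑ v ∈ W.filter (fun v => g v = c),
            (edgeVec s(v, g v)) ⬝ᵥ (P' *ᵥ (edgeVec s(v, g v))) := Finset.sum_le_sum hstar
      _ = ∑ v ∈ W, (edgeVec s(v, g v)) ⬝ᵥ (P' *ᵥ (edgeVec s(v, g v))) := hfiber.symm
      _ ≤ ∑ e ∈ G.edgeFinset, (edgeVec e) ⬝ᵥ (P' *ᵥ (edgeVec e)) := hlower1
  have hSplus : Splus G k = ∑ i ∈ T, lam i := hTsum
  rw [hSplus, hsplit, htraceQ2]
  rw [hdecomp] at hmain ⊢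
  linarith
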